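/- Core scaling limit for the logarithmic resonance rate: for every b > 0 and β ∈ (0, 1), lim_{δ→0⁺} |log δ|^{−1}·δ^{1+β}·∫_0^b |log t|·t^{−β}/(t² + δ²) dt = ∫_0^∞ s^{−β}/(s² + 1) ds. -/

import Mathlib

open Real Filter Topology Set MeasureTheory

lemma aux_int {a : ℝ} (h1 : -1 < a) (h2 : a < 1) :
    IntegrableOn (fun s : ℝ => s ^ a / (s ^ 2 + 1)) (Ioi 0) := by
  have meas : AEStronglyMeasurable (fun s : ℝ => s ^ a / (s ^ 2 + 1))
      (volume.restrict (Ioi (0:ℝ))) :=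
    (by fun_prop : Measurable (fun s : ℝ => s ^ a / (s ^ 2 + 1))).aestronglyMeasurable
  have : (Ioi (0:ℝ)) = Ioc 0 1 ∪ Ioi 1 := (Ioc_union_Ioi_eq_Ioi zero_le_one).symm
  rw [this]
  apply IntegrableOn.union
  · have hg : IntegrableOn (fun s : ℝ => s ^ a) (Ioc (0:ℝ) 1) := by
      rw [← intervalIntegrable_iff_integrableOn_Ioc_of_le zero_le_one]
      exact intervalIntegral.intervalIntegrable_rpow' h1
    refine hg.integrable.mono' (meas.mono_measure (Measure.restrict_mono Ioc_subset_Ioi_self le_rfl)) ?_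
    filter_upwards [ae_restrict_mem measurableSet_Ioc] with s hs
    have hs0 : 0 < s := hs.1
    have : 0 ≤ s ^ a / (s ^ 2 + 1) := by positivity
    rw [Real.norm_eq_abs, abs_of_nonneg this]
    apply div_le_of_le_mul₀ (by positivity) (by positivity)
    nlinarith [Real.rpow_pos_of_pos hs0 a, sq_nonneg s]
  · have hg : IntegrableOn (fun s : ℝ => s ^ (a - 2)) (Ioi (1:ℝ)) :=
      integrableOn_Ioi_rpow_of_lt (by linarith) one_pos
    refine hg.integrable.mono' (meas.mono_measure (Measure.restrict_mono (Ioi_subset_Ioi zero_le_one) le_rfl)) ?_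
    filter_upwards [ae_restrict_mem measurableSet_Ioi] with s hs
    have hs0 : (0:ℝ) < s := lt_trans one_pos hs
    have h0 : 0 ≤ s ^ a / (s ^ 2 + 1) := by positivity
    rw [Real.norm_eq_abs, abs_of_nonneg h0]
    have : s ^ (a - 2) = s ^ a / s ^ 2 := by
      rw [Real.rpow_sub hs0, show (2:ℝ) = ((2:ℕ):ℝ) by norm_num, Real.rpow_natCast]
    rw [this]
    apply div_le_div_of_nonneg_left (Real.rpow_pos_of_pos hs0 a).le (by positivity)
    linarith

lemma aux_log_bound {ε s : ℝ} (hε : 0 < ε) (hs : 0 < s) :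
    |Real.log s| ≤ (s ^ ε + s ^ (-ε)) / ε := by
  have key : ∀ t : ℝ, 0 < t → t ≥ 1 → Real.log t ≤ t ^ ε / ε := by
    intro t ht ht1
    have h1 : Real.log (t ^ ε) ≤ t ^ ε - 1 := Real.log_le_sub_one_of_pos (Real.rpow_pos_of_pos ht ε)
    rw [Real.log_rpow ht] at h1
    have : ε * Real.log t ≤ t ^ ε := by linarith [Real.rpow_nonneg ht.le ε]
    calc Real.log t = ε * Real.log t / ε := by field_simp
    _ ≤ t ^ ε / ε := by gcongr
  rcases le_or_gt 1 s with h | h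
  · rw [abs_of_nonneg (Real.log_nonneg h)]
    calc Real.log s ≤ s ^ ε / ε := key s hs h
    _ ≤ (s ^ ε + s ^ (-ε)) / ε := by
        gcongr
        linarith [Real.rpow_nonneg hs.le (-ε)]
  · have h1 : (1:ℝ) ≤ s⁻¹ := (one_le_inv_iff₀).mpr ⟨hs, h.le⟩
    rw [abs_of_nonpos (Real.log_nonpos hs.le h.le), ← Real.log_inv]
    calc Real.log s⁻¹ ≤ (s⁻¹) ^ ε / ε := key s⁻¹ (by positivity) h1
    _ = s ^ (-ε) / ε := by rw [Real.inv_rpow hs.le, ← Real.rpow_neg hs.le]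
    _ ≤ (s ^ ε + s ^ (-ε)) / ε := by
        gcongr
        linarith [Real.rpow_nonneg hs.le ε]

lemma aux_tendsto (c : ℝ) :
    Tendsto (fun δ : ℝ => |Real.log δ|⁻¹ * |Real.log δ + c|) (𝓝[>] 0) (𝓝 1) := by
  have hinv : Tendsto (fun x : ℝ => x⁻¹) atBot (𝓝 0) := by
    have h := ((tendsto_inv_atTop_zero (𝕜 := ℝ)).comp tendsto_neg_atBot_atTop).neg
    have he : (fun x : ℝ => -(-x)⁻¹) = fun x : ℝ => x⁻¹ := by
      funext x; rw [← inv_neg, neg_neg]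
    rw [show -(0:ℝ) = 0 by ring] at h
    exact he ▸ h
  have h0 : Tendsto (fun x : ℝ => 1 + c * x⁻¹) atBot (𝓝 1) := by
    simpa using tendsto_const_nhds.add (hinv.const_mul c)
  have h1 : Tendsto (fun x : ℝ => |1 + c * x⁻¹|) atBot (𝓝 1) := by
    have := (continuous_abs.tendsto (1:ℝ)).comp h0
    simpa [Function.comp_def] using this
  have h2 : Tendsto (fun x : ℝ => |x|⁻¹ * |x + c|) atBot (𝓝 1) := by
    apply h1.congr'
    filter_upwards [eventually_lt_atBot (0:ℝ)] with x hx
    have hx0 : x ≠ 0 := hx.ne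
    rw [← abs_inv, ← abs_mul]
    congr 1
    field_simp
  exact h2.comp Real.tendsto_log_nhdsGT_zero

/-- core scaling limit for the logarithmic resonance rate: for every
`b > 0` and `β ∈ (0,1)`,
`|log δ|⁻¹·δ^{1+β}·∫₀^b |log t|·t^{−β}/(t²+δ²) dt → ∫₀^∞ s^{−β}/(s²+1) ds`
as `δ → 0⁺`. -/
theorem statement19 (b β : ℝ) (hb : 0 < b) (hβ : β ∈ Set.Ioo (0 : ℝ) 1) :
    Tendsto
      (fun δ : ℝ =>
        |Real.log δ|⁻¹ * δ ^ (1 + β)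
          * ∫ t in Set.Ioo (0 : ℝ) b, |Real.log t| * t ^ (-β) / (t ^ 2 + δ ^ 2))
      (𝓝[>] 0)
      (𝓝 (∫ s in Set.Ioi (0 : ℝ), s ^ (-β) / (s ^ 2 + 1))) := by
  obtain ⟨hβ0, hβ1⟩ := hβ
  set ε : ℝ := (1 - β) / 2 with hε_def
  have hε : 0 < ε := by rw [hε_def]; linarith
  set G : ℝ → ℝ := fun s => s ^ (-β) / (s ^ 2 + 1) with hG
  set ψ : ℝ → ℝ → ℝ :=
    fun δ s => (Ioo (0:ℝ) (b/δ)).indicator (fun s => |Real.log (δ * s)| * G s) s with hψ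
  set F : ℝ → ℝ → ℝ := fun δ s => |Real.log δ|⁻¹ * ψ δ s with hF
  set bound : ℝ → ℝ := fun s =>
    s ^ (-β) / (s ^ 2 + 1) + ε⁻¹ * (s ^ (ε - β) / (s ^ 2 + 1) + s ^ (-ε - β) / (s ^ 2 + 1))
    with hbound
  have hψnn : ∀ δ s, 0 ≤ ψ δ s := by
    intro δ s
    apply Set.indicator_nonneg
    intro t ht
    exact mul_nonneg (abs_nonneg _)
      (div_nonneg (Real.rpow_nonneg ht.1.le _) (by positivity))
  have hψle : ∀ δ s, 0 < δ → 0 < s → δ ≠ 1 → ψ δ s ≤ (|Real.log δ| + |Real.log s|) * G s := by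
    intro δ s hδ0 hs hδ1
    have hGnn : 0 ≤ G s := by rw [hG]; positivity
    by_cases hmem : s ∈ Ioo (0:ℝ) (b/δ)
    · simp only [hψ, indicator_of_mem hmem]
      apply mul_le_mul_of_nonneg_right _ hGnn
      rw [Real.log_mul hδ0.ne' hs.ne']
      exact abs_add_le _ _
    · simp only [hψ, indicator_of_notMem hmem]
      positivity
  -- main DCT step
  have hmain : Tendsto (fun δ => ∫ s in Ioi (0:ℝ), F δ s) (𝓝[>] (0:ℝ))
      (𝓝 (∫ s in Ioi (0:ℝ), G s)) := by
    apply tendsto_integral_filter_of_dominated_convergence bound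
    · -- measurability
      filter_upwards with δ
      apply AEStronglyMeasurable.const_mul
      apply Measurable.aestronglyMeasurable
      apply Measurable.indicator _ measurableSet_Ioo
      rw [hG]
      exact ((Real.measurable_log.comp (measurable_id.const_mul δ)).abs).mul (by fun_prop)
    · -- bound
      have hmem : Ioo (0:ℝ) (Real.exp (-1)) ∈ 𝓝[>] (0:ℝ) :=
        Ioo_mem_nhdsGT_of_mem ⟨le_refl 0, Real.exp_pos _⟩
      filter_upwards [hmem] with δ hδ
      have hδ0 : 0 < δ := hδ.1
      have hlog : Real.log δ < -1 := by
        calc Real.log δ < Real.log (Real.exp (-1)) := Real.log_lt_log hδ0 hδ.2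
        _ = -1 := Real.log_exp _
      have habs : 1 < |Real.log δ| := by rw [abs_of_neg (by linarith)]; linarith
      have hinv : |Real.log δ|⁻¹ ≤ 1 := by
        rw [inv_le_one_iff₀]; right; exact habs.le
      have hδ1 : δ ≠ 1 := by
        intro h; rw [h, Real.log_one] at hlog; norm_num at hlog
      rw [ae_restrict_iff' measurableSet_Ioi]
      filter_upwards with s hs
      have hs0 : (0:ℝ) < s := hs
      have hGnn : 0 ≤ G s := by rw [hG]; positivity
      have hFnn : 0 ≤ F δ s := by
        rw [hF]; exact mul_nonneg (by positivity) (hψnn δ s)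
      rw [Real.norm_eq_abs, abs_of_nonneg hFnn, hF]
      have step1 : |Real.log δ|⁻¹ * ψ δ s ≤ (1 + |Real.log s|) * G s := by
        calc |Real.log δ|⁻¹ * ψ δ s
            ≤ |Real.log δ|⁻¹ * ((|Real.log δ| + |Real.log s|) * G s) := by
              apply mul_le_mul_of_nonneg_left (hψle δ s hδ0 hs0 hδ1) (by positivity)
          _ = |Real.log δ|⁻¹ * |Real.log δ| * G s + |Real.log δ|⁻¹ * (|Real.log s| * G s) := by
              ring
          _ ≤ 1 * G s + 1 * (|Real.log s| * G s) := by
              apply add_le_add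
              · apply mul_le_mul_of_nonneg_right _ hGnn
                rw [inv_mul_cancel₀ (by positivity : |Real.log δ| ≠ 0)]
              · apply mul_le_mul_of_nonneg_right hinv (by positivity)
          _ = (1 + |Real.log s|) * G s := by ring
      refine step1.trans ?_
      have hlb := aux_log_bound hε hs0
      have e1 : s ^ (ε - β) = s ^ ε * s ^ (-β) := by
        rw [← Real.rpow_add hs0]; ring_nf
      have e2 : s ^ (-ε - β) = s ^ (-ε) * s ^ (-β) := by
        rw [← Real.rpow_add hs0]; ring_nf
      calc (1 + |Real.log s|) * G s = G s + |Real.log s| * G s := by ring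
        _ ≤ G s + ((s ^ ε + s ^ (-ε)) / ε) * G s := by gcongr
        _ = bound s := by
            rw [hbound, hG]
            beta_reduce
            rw [e1, e2]
            ring
    · -- bound integrable
      rw [hbound]
      have h1 : IntegrableOn (fun s : ℝ => s ^ (-β) / (s ^ 2 + 1)) (Ioi 0) :=
        aux_int (by linarith) (by linarith)
      have h2 : IntegrableOn (fun s : ℝ => s ^ (ε - β) / (s ^ 2 + 1)) (Ioi 0) :=
        aux_int (by rw [hε_def]; linarith) (by rw [hε_def]; linarith)
      have h3 : IntegrableOn (fun s : ℝ => s ^ (-ε - β) / (s ^ 2 + 1)) (Ioi 0) :=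
        aux_int (by rw [hε_def]; linarith) (by rw [hε_def]; linarith)
      exact h1.add ((h2.add h3).const_mul ε⁻¹)
    · -- pointwise limit
      rw [ae_restrict_iff' measurableSet_Ioi]
      filter_upwards with s hs
      have hs0 : (0:ℝ) < s := hs
      have hev : (fun δ : ℝ => |Real.log δ|⁻¹ * |Real.log δ + Real.log s| * G s)
          =ᶠ[𝓝[>] (0:ℝ)] fun δ => F δ s := by
        have hmem : Ioo (0:ℝ) (b / s) ∈ 𝓝[>] (0:ℝ) :=
          Ioo_mem_nhdsGT_of_mem ⟨le_refl 0, div_pos hb hs0⟩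
        filter_upwards [hmem] with δ hδ
        have hδ0 : 0 < δ := hδ.1
        have hsmem : s ∈ Ioo (0:ℝ) (b / δ) := by
          refine ⟨hs0, ?_⟩
          rw [lt_div_iff₀ hδ0]
          have := (lt_div_iff₀ hs0).mp hδ.2
          linarith [this]
        simp only [hF, hψ, indicator_of_mem hsmem]
        rw [Real.log_mul hδ0.ne' hs0.ne']
        ring
      have hT := (aux_tendsto (Real.log s)).mul_const (G s)
      rw [one_mul] at hT
      exact hT.congr' hev
  -- eventual equality
  have eq1 : (fun δ : ℝ =>
        |Real.log δ|⁻¹ * δ ^ (1 + β)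
          * ∫ t in Set.Ioo (0 : ℝ) b, |Real.log t| * t ^ (-β) / (t ^ 2 + δ ^ 2))
      =ᶠ[𝓝[>] (0:ℝ)] fun δ => ∫ s in Ioi (0:ℝ), F δ s := by
    filter_upwards [self_mem_nhdsWithin] with δ hδ
    have hδ0 : (0:ℝ) < δ := hδ
    set g : ℝ → ℝ := (Ioo (0:ℝ) b).indicator
      (fun t => |Real.log t| * t ^ (-β) / (t ^ 2 + δ ^ 2)) with hg
    have e1 : (∫ t in Set.Ioo (0:ℝ) b, |Real.log t| * t ^ (-β) / (t ^ 2 + δ ^ 2))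
        = ∫ t in Ioi (0:ℝ), g t := by
      rw [hg, setIntegral_indicator measurableSet_Ioo,
        inter_eq_self_of_subset_right Ioo_subset_Ioi_self]
    have e2 : (∫ x in Ioi (0:ℝ), g (δ * x)) = δ⁻¹ • ∫ x in Ioi (0:ℝ), g x := by
      have := integral_comp_mul_left_Ioi g 0 hδ0
      rwa [mul_zero] at this
    have e3 : ∀ x ∈ Ioi (0:ℝ), g (δ * x) = δ ^ (-β - 2) * ψ δ x := by
      intro x hx
      have hx0 : (0:ℝ) < x := hx
      have hrw : (δ * x) ^ (-β) = δ ^ (-β) * x ^ (-β) := Real.mul_rpow hδ0.le hx0.le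
      have hδβ : δ ^ (-β - 2) = δ ^ (-β) / δ ^ 2 := by
        rw [Real.rpow_sub hδ0, show (2:ℝ) = ((2:ℕ):ℝ) by norm_num, Real.rpow_natCast]
      by_cases hmem : x ∈ Ioo (0:ℝ) (b / δ)
      · have h1 : δ * x ∈ Ioo (0:ℝ) b := by
          refine ⟨by positivity, ?_⟩
          have := (lt_div_iff₀ hδ0).mp hmem.2
          linarith
        simp only [hg, indicator_of_mem h1, hψ, indicator_of_mem hmem, hG]
        rw [hrw, hδβ]
        have hd1 : (0:ℝ) < x ^ 2 + 1 := by positivity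
        have hd2 : (0:ℝ) < δ ^ 2 := by positivity
        have hden : (δ * x) ^ 2 + δ ^ 2 = δ ^ 2 * (x ^ 2 + 1) := by ring
        rw [hden]
        field_simp
      · have h1 : δ * x ∉ Ioo (0:ℝ) b := by
          intro hc
          apply hmem
          refine ⟨hx0, ?_⟩
          rw [lt_div_iff₀ hδ0]
          linarith [hc.2]
        simp only [hg, indicator_of_notMem h1, hψ, indicator_of_notMem hmem, mul_zero]
    have e4 : (∫ x in Ioi (0:ℝ), g (δ * x)) = δ ^ (-β - 2) * ∫ x in Ioi (0:ℝ), ψ δ x := by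
      rw [setIntegral_congr_fun measurableSet_Ioi e3, integral_const_mul]
    have e5 : (∫ x in Ioi (0:ℝ), g x) = δ * (δ ^ (-β - 2) * ∫ x in Ioi (0:ℝ), ψ δ x) := by
      rw [← e4, e2, smul_eq_mul, ← mul_assoc, mul_inv_cancel₀ hδ0.ne', one_mul]
    have hone : δ ^ (1 + β) * δ * δ ^ (-β - 2) = 1 := by
      have h1 : δ ^ (1 + β) * δ ^ (-β - 2) = δ ^ (-1:ℝ) := by
        rw [← Real.rpow_add hδ0, show 1 + β + (-β - 2) = (-1:ℝ) by ring]
      calc δ ^ (1 + β) * δ * δ ^ (-β - 2) = δ ^ (1 + β) * δ ^ (-β - 2) * δ := by ring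
        _ = δ ^ (-1:ℝ) * δ := by rw [h1]
        _ = 1 := by rw [Real.rpow_neg_one]; field_simp
    have e6 : (∫ s in Ioi (0:ℝ), F δ s) = |Real.log δ|⁻¹ * ∫ x in Ioi (0:ℝ), ψ δ x := by
      simp only [hF]; exact integral_const_mul _ _
    rw [e1, e5, e6]
    calc |Real.log δ|⁻¹ * δ ^ (1 + β) * (δ * (δ ^ (-β - 2) * ∫ x in Ioi (0:ℝ), ψ δ x))
        = (δ ^ (1 + β) * δ * δ ^ (-β - 2)) * (|Real.log δ|⁻¹ * ∫ x in Ioi (0:ℝ), ψ δ x) := by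
          ring
      _ = |Real.log δ|⁻¹ * ∫ x in Ioi (0:ℝ), ψ δ x := by rw [hone, one_mul]
  exact hmain.congr' eq1.symm
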